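/- Let F be a nonempty intersecting family consisting only of 3-element sets, and let C be the downset generated by F. If there exist two vertices c, v of C such that {c,v} ∉ C (the graph of C is not complete), then there exists an intersecting family F' ⊆ C with |F'| ≥ |F| that contains a set of size at most 2. -/

import Mathlib

open Finset

section helpers

variable {α : Type*} [DecidableEq α]

private lemma card5 (s1 s2 s3 s4 s5 : Finset α) :
    ({s1, s2, s3, s4, s5} : Finset (Finset α)).card ≤ 5 := by
  apply le_trans (card_insert_le _ _)
  apply Nat.succ_le_succ
  apply le_trans (card_insert_le _ _)
  apply Nat.succ_le_succ
  apply le_trans (card_insert_le _ _)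
  apply Nat.succ_le_succ
  apply le_trans (card_insert_le _ _)
  apply Nat.succ_le_succ
  exact le_of_eq (card_singleton _)

/-- Star construction: if all but at most five members of `F` contain `z`, and `z` has four
distinct neighbours witnessed inside members of `F`, then the star at `z` works. -/
private lemma star_lemma (F : Finset (Finset α))
    (h3 : ∀ B ∈ F, B.card = 3)
    (z n1 n2 n3 n4 : α) (W1 W2 : Finset α) (hW1 : W1 ∈ F) (hW2 : W2 ∈ F)
    (hz1 : z ∈ W1) (hz2 : z ∈ W2)
    (hn1 : n1 ∈ W1) (hn2 : n2 ∈ W1) (hn3 : n3 ∈ W2) (hn4 : n4 ∈ W2)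
    (d12 : n1 ≠ n2) (d13 : n1 ≠ n3) (d14 : n1 ≠ n4)
    (d23 : n2 ≠ n3) (d24 : n2 ≠ n4) (d34 : n3 ≠ n4)
    (dz1 : n1 ≠ z) (dz2 : n2 ≠ z) (dz3 : n3 ≠ z) (dz4 : n4 ≠ z)
    (S : Finset (Finset α)) (hS : S.card ≤ 5)
    (hcov : ∀ D ∈ F, z ∈ D ∨ D ∈ S) :
    ∃ F' : Finset (Finset α), F' ⊆ F.biUnion Finset.powerset ∧
      (∀ A ∈ F', ∀ B ∈ F', (A ∩ B).Nonempty) ∧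
      F.card ≤ F'.card ∧ ∃ B ∈ F', B.card ≤ 2 := by
  classical
  set T : Finset (Finset α) := F.filter (fun D => z ∈ D) with hT
  refine ⟨insert {z} (insert {z, n1} (insert {z, n2} (insert {z, n3} (insert {z, n4} T)))),
    ?_, ?_, ?_, ?_⟩
  · -- subset of downset
    intro D hD
    simp only [mem_insert] at hD
    rcases hD with rfl | rfl | rfl | rfl | rfl | hD
    · exact mem_biUnion.mpr ⟨W1, hW1, mem_powerset.mpr (singleton_subset_iff.mpr hz1)⟩
    · exact mem_biUnion.mpr ⟨W1, hW1, mem_powerset.mpr (insert_subset hz1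
        (singleton_subset_iff.mpr hn1))⟩
    · exact mem_biUnion.mpr ⟨W1, hW1, mem_powerset.mpr (insert_subset hz1
        (singleton_subset_iff.mpr hn2))⟩
    · exact mem_biUnion.mpr ⟨W2, hW2, mem_powerset.mpr (insert_subset hz2
        (singleton_subset_iff.mpr hn3))⟩
    · exact mem_biUnion.mpr ⟨W2, hW2, mem_powerset.mpr (insert_subset hz2
        (singleton_subset_iff.mpr hn4))⟩
    · exact mem_biUnion.mpr ⟨D, (mem_filter.mp hD).1, mem_powerset.mpr subset_rfl⟩
  · -- intersecting: everything contains z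
    have hz' : ∀ D ∈ insert {z} (insert {z, n1} (insert {z, n2}
        (insert {z, n3} (insert {z, n4} T)))), z ∈ D := by
      intro D hD
      simp only [mem_insert] at hD
      rcases hD with rfl | rfl | rfl | rfl | rfl | hD
      · exact mem_singleton_self z
      · exact mem_insert_self _ _
      · exact mem_insert_self _ _
      · exact mem_insert_self _ _
      · exact mem_insert_self _ _
      · exact (mem_filter.mp hD).2
    intro A hA B hB
    exact ⟨z, mem_inter.mpr ⟨hz' A hA, hz' B hB⟩⟩
  · -- cardinality
    have cz : ({z} : Finset α).card = 1 := card_singleton z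
    have c1 : ({z, n1} : Finset α).card = 2 := card_pair (Ne.symm dz1)
    have c2 : ({z, n2} : Finset α).card = 2 := card_pair (Ne.symm dz2)
    have c3 : ({z, n3} : Finset α).card = 2 := card_pair (Ne.symm dz3)
    have c4 : ({z, n4} : Finset α).card = 2 := card_pair (Ne.symm dz4)
    have hTcard : ∀ D ∈ T, D.card = 3 := fun D hD => h3 D (mem_filter.mp hD).1
    have pairne : ∀ i j : α, i ≠ j → i ≠ z → ({z, i} : Finset α) ≠ {z, j} := by
      intro i j hij hiz h
      have : i ∈ ({z, j} : Finset α) := h ▸ mem_insert_of_mem (mem_singleton_self i)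
      simp only [mem_insert, mem_singleton] at this
      tauto
    have m4 : ({z, n4} : Finset α) ∉ T := fun h => by
      have := hTcard _ h; rw [c4] at this; omega
    have m3 : ({z, n3} : Finset α) ∉ insert {z, n4} T := by
      intro h
      rcases mem_insert.mp h with h | h
      · exact pairne n3 n4 d34 dz3 h
      · have := hTcard _ h; rw [c3] at this; omega
    have m2 : ({z, n2} : Finset α) ∉ insert {z, n3} (insert {z, n4} T) := by
      intro h
      rcases mem_insert.mp h with h | h
      · exact pairne n2 n3 d23 dz2 h
      rcases mem_insert.mp h with h | h
      · exact pairne n2 n4 d24 dz2 h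
      · have := hTcard _ h; rw [c2] at this; omega
    have m1 : ({z, n1} : Finset α) ∉ insert {z, n2} (insert {z, n3} (insert {z, n4} T)) := by
      intro h
      rcases mem_insert.mp h with h | h
      · exact pairne n1 n2 d12 dz1 h
      rcases mem_insert.mp h with h | h
      · exact pairne n1 n3 d13 dz1 h
      rcases mem_insert.mp h with h | h
      · exact pairne n1 n4 d14 dz1 h
      · have := hTcard _ h; rw [c1] at this; omega
    have singne : ∀ i : α, i ≠ z → ({z} : Finset α) ≠ {z, i} := by
      intro i hiz h
      have : i ∈ ({z} : Finset α) := by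
        rw [h]; exact mem_insert_of_mem (mem_singleton_self i)
      exact hiz (mem_singleton.mp this)
    have m0 : ({z} : Finset α) ∉ insert {z, n1} (insert {z, n2}
        (insert {z, n3} (insert {z, n4} T))) := by
      intro h
      rcases mem_insert.mp h with h | h
      · exact singne n1 dz1 h
      rcases mem_insert.mp h with h | h
      · exact singne n2 dz2 h
      rcases mem_insert.mp h with h | h
      · exact singne n3 dz3 h
      rcases mem_insert.mp h with h | h
      · exact singne n4 dz4 h
      · have := hTcard _ h; rw [cz] at this; omega
    have hcard : (insert {z} (insert {z, n1} (insert {z, n2}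
        (insert {z, n3} (insert {z, n4} T))))).card = T.card + 5 := by
      rw [card_insert_of_notMem m0, card_insert_of_notMem m1, card_insert_of_notMem m2,
        card_insert_of_notMem m3, card_insert_of_notMem m4]
    rw [hcard]
    have hsplit : (F.filter (fun D => z ∈ D)).card
        + (F.filter (fun D => ¬ z ∈ D)).card = F.card :=
      card_filter_add_card_filter_not _
    rw [← hT] at hsplit
    have hsub : F.filter (fun D => ¬ z ∈ D) ⊆ S := by
      intro D hD
      have h' := mem_filter.mp hD
      rcases hcov D h'.1 with h | h
      · exact absurd h h'.2
      · exact h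
    have := card_le_card hsub
    omega
  · exact ⟨{z}, mem_insert_self _ _, by rw [card_singleton]; omega⟩

/-- Compression at `v`: replace each member containing `v` by its erase. -/
private lemma compress_lemma (F : Finset (Finset α))
    (hF : ∀ A ∈ F, ∀ B ∈ F, (A ∩ B).Nonempty)
    (h3 : ∀ B ∈ F, B.card = 3)
    (v : α) (B0 : Finset α) (hB0 : B0 ∈ F) (hvB0 : v ∈ B0)
    (hgood : ∀ A ∈ F, v ∈ A → ∀ B ∈ F, v ∈ B → ((A ∩ B).erase v).Nonempty) :
    ∃ F' : Finset (Finset α), F' ⊆ F.biUnion Finset.powerset ∧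
      (∀ A ∈ F', ∀ B ∈ F', (A ∩ B).Nonempty) ∧
      F.card ≤ F'.card ∧ ∃ B ∈ F', B.card ≤ 2 := by
  classical
  set G1 : Finset (Finset α) := F.filter (fun D => ¬ v ∈ D) with hG1
  set G2 : Finset (Finset α) := (F.filter (fun D => v ∈ D)).image (fun D => D.erase v) with hG2
  have hG2card : ∀ D ∈ G2, D.card = 2 := by
    intro D hD
    obtain ⟨B, hB, rfl⟩ := mem_image.mp hD
    have hB' := mem_filter.mp hB
    rw [card_erase_of_mem hB'.2, h3 B hB'.1]
  refine ⟨G1 ∪ G2, ?_, ?_, ?_, ?_⟩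
  · intro D hD
    rcases mem_union.mp hD with hD | hD
    · exact mem_biUnion.mpr ⟨D, (mem_filter.mp hD).1, mem_powerset.mpr subset_rfl⟩
    · obtain ⟨B, hB, rfl⟩ := mem_image.mp hD
      exact mem_biUnion.mpr ⟨B, (mem_filter.mp hB).1, mem_powerset.mpr (erase_subset v B)⟩
  · intro X hX Y hY
    rcases mem_union.mp hX with hX | hX <;> rcases mem_union.mp hY with hY | hY
    · exact hF X (mem_filter.mp hX).1 Y (mem_filter.mp hY).1
    · obtain ⟨B, hB, rfl⟩ := mem_image.mp hY
      have hB' := mem_filter.mp hB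
      have hX' := mem_filter.mp hX
      obtain ⟨w, hw⟩ := hF X hX'.1 B hB'.1
      rw [mem_inter] at hw
      refine ⟨w, mem_inter.mpr ⟨hw.1, mem_erase.mpr ⟨?_, hw.2⟩⟩⟩
      intro h; exact hX'.2 (h ▸ hw.1)
    · obtain ⟨B, hB, rfl⟩ := mem_image.mp hX
      have hB' := mem_filter.mp hB
      have hY' := mem_filter.mp hY
      obtain ⟨w, hw⟩ := hF Y hY'.1 B hB'.1
      rw [mem_inter] at hw
      refine ⟨w, mem_inter.mpr ⟨mem_erase.mpr ⟨?_, hw.2⟩, hw.1⟩⟩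
      intro h; exact hY'.2 (h ▸ hw.1)
    · obtain ⟨X0, hX0, rfl⟩ := mem_image.mp hX
      obtain ⟨Y0, hY0, rfl⟩ := mem_image.mp hY
      have hX0' := mem_filter.mp hX0
      have hY0' := mem_filter.mp hY0
      obtain ⟨w, hw⟩ := hgood X0 hX0'.1 hX0'.2 Y0 hY0'.1 hY0'.2
      rw [mem_erase, mem_inter] at hw
      exact ⟨w, mem_inter.mpr ⟨mem_erase.mpr ⟨hw.1, hw.2.1⟩, mem_erase.mpr ⟨hw.1, hw.2.2⟩⟩⟩
  · have hdisj : Disjoint G1 G2 := by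
      rw [disjoint_left]
      intro D hD1 hD2
      have h1 : D.card = 3 := h3 D (mem_filter.mp hD1).1
      have h2 := hG2card D hD2
      omega
    rw [card_union_of_disjoint hdisj]
    have himg : G2.card = (F.filter (fun D => v ∈ D)).card := by
      apply card_image_of_injOn
      intro X hX Y hY h
      have hX' := mem_filter.mp hX
      have hY' := mem_filter.mp hY
      calc X = insert v (X.erase v) := (insert_erase hX'.2).symm
        _ = insert v (Y.erase v) := by rw [show X.erase v = Y.erase v from h]
        _ = Y := insert_erase hY'.2
    rw [himg]
    have := card_filter_add_card_filter_not (s := F) (p := fun D => v ∈ D)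
    rw [← hG1] at this
    omega
  · refine ⟨B0.erase v, mem_union_right _ (mem_image.mpr ⟨B0, mem_filter.mpr ⟨hB0, hvB0⟩, rfl⟩), ?_⟩
    rw [card_erase_of_mem hvB0, h3 B0 hB0]


private lemma eq_of_three {α : Type*} [DecidableEq α] (D : Finset α) (hD : D.card = 3)
    (x y z : α) (hx : x ∈ D) (hy : y ∈ D) (hz : z ∈ D)
    (hxy : x ≠ y) (hxz : x ≠ z) (hyz : y ≠ z) : D = ({x, y, z} : Finset α) := by
  have hsub : ({x, y, z} : Finset α) ⊆ D :=
    insert_subset hx (insert_subset hy (singleton_subset_iff.mpr hz))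
  have hcard : ({x, y, z} : Finset α).card = 3 := by
    rw [card_insert_of_notMem (by simp [hxy, hxz]), card_pair hyz]
  exact (eq_of_subset_of_card_le hsub (by omega)).symm

private lemma caseC {α : Type*} [DecidableEq α] (F : Finset (Finset α))
    (hF : ∀ A ∈ F, ∀ B ∈ F, (A ∩ B).Nonempty)
    (h3 : ∀ B ∈ F, B.card = 3)
    (c v : α)
    (hcv' : ∀ D ∈ F, ¬(c ∈ D ∧ v ∈ D))
    (A A' B B' : Finset α)
    (hAF : A ∈ F) (hA'F : A' ∈ F) (hBF : B ∈ F) (hB'F : B' ∈ F)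
    (hcA : c ∈ A) (hcA' : c ∈ A') (hvB : v ∈ B) (hvB' : v ∈ B')
    (hAA' : ∀ x, x ∈ A → x ∈ A' → x = c)
    (hBB' : ∀ x, x ∈ B → x ∈ B' → x = v) :
    ∃ F' : Finset (Finset α), F' ⊆ F.biUnion Finset.powerset ∧
      (∀ A ∈ F', ∀ B ∈ F', (A ∩ B).Nonempty) ∧
      F.card ≤ F'.card ∧ ∃ B ∈ F', B.card ≤ 2 := by
  classical
  obtain ⟨a, ha⟩ := hF A hAF B hBF; rw [mem_inter] at ha
  obtain ⟨b, hb⟩ := hF A hAF B' hB'F; rw [mem_inter] at hb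
  obtain ⟨a2, ha2⟩ := hF A' hA'F B hBF; rw [mem_inter] at ha2
  obtain ⟨b2, hb2⟩ := hF A' hA'F B' hB'F; rw [mem_inter] at hb2
  have hcB : c ∉ B := fun h => hcv' B hBF ⟨h, hvB⟩
  have hcB' : c ∉ B' := fun h => hcv' B' hB'F ⟨h, hvB'⟩
  have hvA : v ∉ A := fun h => hcv' A hAF ⟨hcA, h⟩
  have hvA' : v ∉ A' := fun h => hcv' A' hA'F ⟨hcA', h⟩
  have hac : a ≠ c := fun h => hcB (h ▸ ha.2)
  have hbc : b ≠ c := fun h => hcB' (h ▸ hb.2)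
  have ha2c : a2 ≠ c := fun h => hcB (h ▸ ha2.2)
  have hb2c : b2 ≠ c := fun h => hcB' (h ▸ hb2.2)
  have hav : a ≠ v := fun h => hvA (h ▸ ha.1)
  have hbv : b ≠ v := fun h => hvA (h ▸ hb.1)
  have ha2v : a2 ≠ v := fun h => hvA' (h ▸ ha2.1)
  have hb2v : b2 ≠ v := fun h => hvA' (h ▸ hb2.1)
  have hab : a ≠ b := by
    intro h; exact hav (hBB' a ha.2 (by rw [h]; exact hb.2))
  have hab2 : a ≠ b2 := by
    intro h; exact hav (hBB' a ha.2 (by rw [h]; exact hb2.2))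
  have ha2b : a2 ≠ b := by
    intro h; exact ha2v (hBB' a2 ha2.2 (by rw [h]; exact hb.2))
  have ha2b2 : a2 ≠ b2 := by
    intro h; exact ha2v (hBB' a2 ha2.2 (by rw [h]; exact hb2.2))
  have haa2 : a ≠ a2 := by
    intro h; exact hac (hAA' a ha.1 (by rw [h]; exact ha2.1))
  have hbb2 : b ≠ b2 := by
    intro h; exact hbc (hAA' b hb.1 (by rw [h]; exact hb2.1))
  have hcvne : c ≠ v := fun h => hcv' A hAF ⟨hcA, h ▸ hcA⟩
  have hAeq : A = ({c, a, b} : Finset α) :=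
    eq_of_three A (h3 A hAF) c a b hcA ha.1 hb.1 (Ne.symm hac) (Ne.symm hbc) hab
  have hA'eq : A' = ({c, a2, b2} : Finset α) :=
    eq_of_three A' (h3 A' hA'F) c a2 b2 hcA' ha2.1 hb2.1 (Ne.symm ha2c) (Ne.symm hb2c) ha2b2
  have hBeq : B = ({v, a, a2} : Finset α) :=
    eq_of_three B (h3 B hBF) v a a2 hvB ha.2 ha2.2 (Ne.symm hav) (Ne.symm ha2v) haa2
  have hB'eq : B' = ({v, b, b2} : Finset α) :=
    eq_of_three B' (h3 B' hB'F) v b b2 hvB' hb.2 hb2.2 (Ne.symm hbv) (Ne.symm hb2v) hbb2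
  by_cases hq : ∀ D ∈ F, a ∈ D ∨
      D ∈ ({A', {c, a2, b}, B', {v, b, a2}, {b, a2, b2}} : Finset (Finset α))
  · exact star_lemma F h3 a c b v a2 A B hAF hBF ha.1 ha.2 hcA hb.1 hvB ha2.2
      (Ne.symm hbc) hcvne (Ne.symm ha2c) hbv (Ne.symm ha2b) (Ne.symm ha2v)
      (Ne.symm hac) (Ne.symm hab) (Ne.symm hav) (Ne.symm haa2)
      _ (card5 _ _ _ _ _) hq
  push_neg at hq
  obtain ⟨q, hqF, hqa, hqS⟩ := hq
  -- q does not contain c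
  have hcq : c ∉ q := by
    intro hcq
    have hvq : v ∉ q := fun h => hcv' q hqF ⟨hcq, h⟩
    have ha2q : a2 ∈ q := by
      obtain ⟨x, hx⟩ := hF q hqF B hBF; rw [mem_inter] at hx
      rcases hx with ⟨hxq, hxB⟩
      rw [hBeq] at hxB
      simp only [mem_insert, mem_singleton] at hxB
      rcases hxB with rfl | rfl | rfl
      · exact absurd hxq hvq
      · exact absurd hxq hqa
      · exact hxq
    obtain ⟨x, hx⟩ := hF q hqF B' hB'F; rw [mem_inter] at hx
    rcases hx with ⟨hxq, hxB'⟩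
    rw [hB'eq] at hxB'
    simp only [mem_insert, mem_singleton] at hxB'
    rcases hxB' with rfl | rfl | rfl
    · exact absurd hxq hvq
    · apply hqS
      rw [eq_of_three q (h3 q hqF) c a2 x hcq ha2q hxq (Ne.symm ha2c)
        (Ne.symm (by exact fun h => hcB' (h ▸ hb.2) : x ≠ c)) (by exact fun h => ha2v (hBB' a2 ha2.2 (h ▸ hb.2)) : a2 ≠ x)]
      exact mem_insert_of_mem (mem_insert_self _ _)
    · apply hqS
      rw [eq_of_three q (h3 q hqF) c a2 x hcq ha2q hxq (Ne.symm ha2c) (Ne.symm hb2c) ha2b2,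
        ← hA'eq]
      exact mem_insert_self _ _
  have hvq : v ∉ q := by
    intro hvq
    have hbq : b ∈ q := by
      obtain ⟨x, hx⟩ := hF q hqF A hAF; rw [mem_inter] at hx
      rcases hx with ⟨hxq, hxA⟩
      rw [hAeq] at hxA
      simp only [mem_insert, mem_singleton] at hxA
      rcases hxA with rfl | rfl | rfl
      · exact absurd hxq hcq
      · exact absurd hxq hqa
      · exact hxq
    obtain ⟨x, hx⟩ := hF q hqF A' hA'F; rw [mem_inter] at hx
    rcases hx with ⟨hxq, hxA'⟩
    rw [hA'eq] at hxA'
    simp only [mem_insert, mem_singleton] at hxA'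
    rcases hxA' with rfl | rfl | rfl
    · exact absurd hxq hcq
    · apply hqS
      rw [eq_of_three q (h3 q hqF) v b x hvq hbq hxq (Ne.symm hbv) (Ne.symm ha2v) ha2b.symm]
      exact mem_insert_of_mem (mem_insert_of_mem (mem_insert_of_mem (mem_insert_self _ _)))
    · apply hqS
      rw [eq_of_three q (h3 q hqF) v b x hvq hbq hxq (Ne.symm hbv) (Ne.symm hb2v) hbb2,
        ← hB'eq]
      exact mem_insert_of_mem (mem_insert_of_mem (mem_insert_self _ _))
  have hbq : b ∈ q := by
    obtain ⟨x, hx⟩ := hF q hqF A hAF; rw [mem_inter] at hx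
    rcases hx with ⟨hxq, hxA⟩
    rw [hAeq] at hxA
    simp only [mem_insert, mem_singleton] at hxA
    rcases hxA with rfl | rfl | rfl
    · exact absurd hxq hcq
    · exact absurd hxq hqa
    · exact hxq
  have ha2q : a2 ∈ q := by
    obtain ⟨x, hx⟩ := hF q hqF B hBF; rw [mem_inter] at hx
    rcases hx with ⟨hxq, hxB⟩
    rw [hBeq] at hxB
    simp only [mem_insert, mem_singleton] at hxB
    rcases hxB with rfl | rfl | rfl
    · exact absurd hxq hvq
    · exact absurd hxq hqa
    · exact hxq
  -- extract the third element y of q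
  have ha2e : a2 ∈ q.erase b := mem_erase.mpr ⟨ha2b, ha2q⟩
  have e1 : (q.erase b).card = 2 := by rw [card_erase_of_mem hbq, h3 q hqF]
  have e2 : ((q.erase b).erase a2).card = 1 := by rw [card_erase_of_mem ha2e, e1]
  obtain ⟨y, hy⟩ := card_eq_one.mp e2
  have hyq' : y ∈ (q.erase b).erase a2 := hy ▸ mem_singleton_self y
  have hya2 : y ≠ a2 := (mem_erase.mp hyq').1
  have hyb : y ≠ b := (mem_erase.mp (mem_of_mem_erase hyq')).1
  have hyq : y ∈ q := mem_of_mem_erase (mem_of_mem_erase hyq')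
  have hqeq : q = ({b, a2, y} : Finset α) :=
    eq_of_three q (h3 q hqF) b a2 y hbq ha2q hyq ha2b.symm (Ne.symm hyb) (Ne.symm hya2)
  have hyc : y ≠ c := fun h => hcq (h ▸ hyq)
  have hyv : y ≠ v := fun h => hvq (h ▸ hyq)
  have hya : y ≠ a := fun h => hqa (h ▸ hyq)
  have hyb2 : y ≠ b2 := by
    intro h
    apply hqS
    rw [hqeq, h]
    exact mem_insert_of_mem (mem_insert_of_mem (mem_insert_of_mem
      (mem_insert_of_mem (mem_singleton_self _))))
  have haq : a ∉ q := hqa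
  have hb2q : b2 ∉ q := by
    rw [hqeq]
    simp only [mem_insert, mem_singleton]
    push_neg
    exact ⟨Ne.symm hbb2, Ne.symm ha2b2, Ne.symm hyb2⟩
  -- covering claim for the star at b
  have hcov2 : ∀ D ∈ F, b ∈ D ∨
      D ∈ ({A', B, {a, a2, b2}, {a, b2, y}, {a, b2, y}} : Finset (Finset α)) := by
    intro D hD
    by_cases hbD : b ∈ D
    · exact Or.inl hbD
    right
    by_cases hcD : c ∈ D
    · have hvD : v ∉ D := fun h => hcv' D hD ⟨hcD, h⟩
      have hb2D : b2 ∈ D := by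
        obtain ⟨x, hx⟩ := hF D hD B' hB'F; rw [mem_inter] at hx
        rcases hx with ⟨hxD, hxB'⟩
        rw [hB'eq] at hxB'
        simp only [mem_insert, mem_singleton] at hxB'
        rcases hxB' with rfl | rfl | rfl
        · exact absurd hxD hvD
        · exact absurd hxD hbD
        · exact hxD
      obtain ⟨x, hx⟩ := hF D hD B hBF; rw [mem_inter] at hx
      rcases hx with ⟨hxD, hxB⟩
      rw [hBeq] at hxB
      simp only [mem_insert, mem_singleton] at hxB
      rcases hxB with rfl | rfl | rfl
      · exact absurd hxD hvD
      · -- D = {c, a, b2}, contradicts intersection with q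
        exfalso
        have hDeq : D = ({c, x, b2} : Finset α) :=
          eq_of_three D (h3 D hD) c x b2 hcD hxD hb2D (Ne.symm hac) (Ne.symm hb2c) hab2
        obtain ⟨w, hw⟩ := hF D hD q hqF; rw [mem_inter] at hw
        rcases hw with ⟨hwD, hwq⟩
        rw [hDeq] at hwD
        simp only [mem_insert, mem_singleton] at hwD
        rcases hwD with rfl | rfl | rfl
        · exact hcq hwq
        · exact hqa hwq
        · exact hb2q hwq
      · -- D = A'
        have hDeq : D = ({c, x, b2} : Finset α) :=
          eq_of_three D (h3 D hD) c x b2 hcD hxD hb2D (Ne.symm ha2c) (Ne.symm hb2c) ha2b2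
        rw [hDeq, ← hA'eq]
        exact mem_insert_self _ _
    by_cases hvD : v ∈ D
    · have haD : a ∈ D := by
        obtain ⟨x, hx⟩ := hF D hD A hAF; rw [mem_inter] at hx
        rcases hx with ⟨hxD, hxA⟩
        rw [hAeq] at hxA
        simp only [mem_insert, mem_singleton] at hxA
        rcases hxA with rfl | rfl | rfl
        · exact absurd hxD hcD
        · exact hxD
        · exact absurd hxD hbD
      obtain ⟨x, hx⟩ := hF D hD A' hA'F; rw [mem_inter] at hx
      rcases hx with ⟨hxD, hxA'⟩
      rw [hA'eq] at hxA'
      simp only [mem_insert, mem_singleton] at hxA'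
      rcases hxA' with rfl | rfl | rfl
      · exact absurd hxD hcD
      · -- D = B
        have hDeq : D = ({v, a, x} : Finset α) :=
          eq_of_three D (h3 D hD) v a x hvD haD hxD (Ne.symm hav) (Ne.symm ha2v) haa2
        rw [hDeq, ← hBeq]
        exact mem_insert_of_mem (mem_insert_self _ _)
      · -- D = {v, a, b2}, contradicts intersection with q
        exfalso
        have hDeq : D = ({v, a, x} : Finset α) :=
          eq_of_three D (h3 D hD) v a x hvD haD hxD (Ne.symm hav) (Ne.symm hb2v) hab2
        obtain ⟨w, hw⟩ := hF D hD q hqF; rw [mem_inter] at hw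
        rcases hw with ⟨hwD, hwq⟩
        rw [hDeq] at hwD
        simp only [mem_insert, mem_singleton] at hwD
        rcases hwD with rfl | rfl | rfl
        · exact hvq hwq
        · exact hqa hwq
        · exact hb2q hwq
    · -- c, v ∉ D
      have haD : a ∈ D := by
        obtain ⟨x, hx⟩ := hF D hD A hAF; rw [mem_inter] at hx
        rcases hx with ⟨hxD, hxA⟩
        rw [hAeq] at hxA
        simp only [mem_insert, mem_singleton] at hxA
        rcases hxA with rfl | rfl | rfl
        · exact absurd hxD hcD
        · exact hxD
        · exact absurd hxD hbD
      have hb2D : b2 ∈ D := by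
        obtain ⟨x, hx⟩ := hF D hD B' hB'F; rw [mem_inter] at hx
        rcases hx with ⟨hxD, hxB'⟩
        rw [hB'eq] at hxB'
        simp only [mem_insert, mem_singleton] at hxB'
        rcases hxB' with rfl | rfl | rfl
        · exact absurd hxD hvD
        · exact absurd hxD hbD
        · exact hxD
      obtain ⟨w, hw⟩ := hF D hD q hqF; rw [mem_inter] at hw
      rcases hw with ⟨hwD, hwq⟩
      rw [hqeq] at hwq
      simp only [mem_insert, mem_singleton] at hwq
      rcases hwq with rfl | rfl | rfl
      · exact absurd hwD hbD
      · -- D = {a, a2, b2}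
        have hDeq : D = ({a, w, b2} : Finset α) :=
          eq_of_three D (h3 D hD) a w b2 haD hwD hb2D haa2 hab2 ha2b2
        rw [hDeq]
        exact mem_insert_of_mem (mem_insert_of_mem (mem_insert_self _ _))
      · -- D = {a, b2, w} with w = y
        have hDeq : D = ({a, b2, w} : Finset α) :=
          eq_of_three D (h3 D hD) a b2 w haD hb2D hwD hab2 (Ne.symm hya) (Ne.symm hyb2)
        rw [hDeq]
        exact mem_insert_of_mem (mem_insert_of_mem (mem_insert_of_mem (mem_insert_self _ _)))
  exact star_lemma F h3 b c a v b2 A B' hAF hB'F hb.1 hb.2 hcA ha.1 hvB' hb2.2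
    (Ne.symm hac) hcvne (Ne.symm hb2c) hav hab2 (Ne.symm hb2v)
    (Ne.symm hbc) hab (Ne.symm hbv) (Ne.symm hbb2)
    _ (card5 _ _ _ _ _) hcov2

end helpers

/-- If the graph of the downset generated by a nonempty intersecting family of triangles is
not complete, there is an intersecting family in the downset, at least as large, containing
a set of size at most 2. -/
theorem stmt_6 {α : Type*} [DecidableEq α] (F : Finset (Finset α))
    (hne : F.Nonempty)
    (hF : ∀ A ∈ F, ∀ B ∈ F, (A ∩ B).Nonempty)
    (h3 : ∀ B ∈ F, B.card = 3) :
    let C : Finset (Finset α) := F.biUnion Finset.powerset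
    ∀ c v : α, {c} ∈ C → {v} ∈ C → ({c, v} : Finset α) ∉ C →
    ∃ F' : Finset (Finset α), F' ⊆ C ∧
      (∀ A ∈ F', ∀ B ∈ F', (A ∩ B).Nonempty) ∧
      F.card ≤ F'.card ∧ ∃ B ∈ F', B.card ≤ 2 := by
  classical
  intro C c v hc hv hcv
  obtain ⟨Tc, hTcF, hTc⟩ := Finset.mem_biUnion.mp hc
  have hcTc : c ∈ Tc := Finset.mem_powerset.mp hTc (Finset.mem_singleton_self c)
  obtain ⟨Tv, hTvF, hTv⟩ := Finset.mem_biUnion.mp hv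
  have hvTv : v ∈ Tv := Finset.mem_powerset.mp hTv (Finset.mem_singleton_self v)
  have hcv' : ∀ D ∈ F, ¬(c ∈ D ∧ v ∈ D) := by
    intro D hD h
    apply hcv
    refine Finset.mem_biUnion.mpr ⟨D, hD, Finset.mem_powerset.mpr ?_⟩
    exact Finset.insert_subset h.1 (Finset.singleton_subset_iff.mpr h.2)
  by_cases hv4 : ∀ A ∈ F, v ∈ A → ∀ B ∈ F, v ∈ B → ((A ∩ B).erase v).Nonempty
  · exact compress_lemma F hF h3 v Tv hTvF hvTv hv4
  by_cases hc4 : ∀ A ∈ F, c ∈ A → ∀ B ∈ F, c ∈ B → ((A ∩ B).erase c).Nonempty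
  · exact compress_lemma F hF h3 c Tc hTcF hcTc hc4
  push_neg at hv4 hc4
  obtain ⟨B, hBF, hvB, B', hB'F, hvB', hBB'⟩ := hv4
  obtain ⟨A, hAF, hcA, A', hA'F, hcA', hAA'⟩ := hc4
  have hAA'2 : ∀ x, x ∈ A → x ∈ A' → x = c := by
    intro x h1 h2
    by_contra hne
    exact (Finset.not_nonempty_iff_eq_empty.mpr hAA') ⟨x, Finset.mem_erase.mpr ⟨hne, Finset.mem_inter.mpr ⟨h1, h2⟩⟩⟩
  have hBB'2 : ∀ x, x ∈ B → x ∈ B' → x = v := by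
    intro x h1 h2
    by_contra hne
    exact (Finset.not_nonempty_iff_eq_empty.mpr hBB') ⟨x, Finset.mem_erase.mpr ⟨hne, Finset.mem_inter.mpr ⟨h1, h2⟩⟩⟩
  exact caseC F hF h3 c v hcv' A A' B B' hAF hA'F hBF hB'F hcA hcA' hvB hvB' hAA'2 hBB'2
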